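/- Let ζ ∈ ℝ with ζ ≠ 0. Let S be the 4-index array with nonzero entries S^{11}_{22} = ζ, S^{12}_{12} = -1, S^{21}_{21} = -1, S^{22}_{11} = ζ⁻¹, and let g be the matrix with nonzero entries g^{11} = i, g^{22} = -iζ⁻¹. Then: (a) S satisfies the braid equation S₁₂S₂₃S₁₂ = S₂₃S₁₂S₂₃; (b) g annihilates the symmetrized tensor product: Σ_{k,l} (δ^i_k δ^j_l + S^{ij}_{kl}) g^{kl} = 0 for all i,j; (c) the metric-compatibility condition holds: Σ_{m,n,r} S^{im}_{ln} g^{nr} S^{jk}_{mr} = g^{ij} δ^k_l for all i,j,k,l. -/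

import Mathlib

open Finset

/-- The degenerate 'exotic' flip: nonzero entries `S^{11}_{22} = ζ`,
`S^{12}_{12} = -1`, `S^{21}_{21} = -1`, `S^{22}_{11} = ζ⁻¹`, with `ζ` a
nonzero real parameter. -/
noncomputable def exoticS (ζ : ℝ) : Fin 2 → Fin 2 → Fin 2 → Fin 2 → ℂ :=
  fun i j k l =>
    if i = 0 ∧ j = 0 ∧ k = 1 ∧ l = 1 then (ζ : ℂ)
    else if i = 0 ∧ j = 1 ∧ k = 0 ∧ l = 1 then -1
    else if i = 1 ∧ j = 0 ∧ k = 1 ∧ l = 0 then -1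
    else if i = 1 ∧ j = 1 ∧ k = 0 ∧ l = 0 then (ζ : ℂ)⁻¹
    else 0

/-- The 'exotic' metric: nonzero entries `g^{11} = i`, `g^{22} = -iζ⁻¹`. -/
noncomputable def exoticg (ζ : ℝ) : Fin 2 → Fin 2 → ℂ :=
  fun i j =>
    if i = 0 ∧ j = 0 then Complex.I
    else if i = 1 ∧ j = 1 then -Complex.I * (ζ : ℂ)⁻¹
    else 0

/-- `(S₁₂)^{abc}_{def} = S^{ab}_{de} δ^c_f`, acting on `ℂ² ⊗ ℂ² ⊗ ℂ²`. -/
noncomputable def lift12 (S : Fin 2 → Fin 2 → Fin 2 → Fin 2 → ℂ) :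
    Fin 2 → Fin 2 → Fin 2 → Fin 2 → Fin 2 → Fin 2 → ℂ :=
  fun a b c d e f => S a b d e * (if c = f then 1 else 0)

/-- `(S₂₃)^{abc}_{def} = δ^a_d S^{bc}_{ef}`, acting on `ℂ² ⊗ ℂ² ⊗ ℂ²`. -/
noncomputable def lift23 (S : Fin 2 → Fin 2 → Fin 2 → Fin 2 → ℂ) :
    Fin 2 → Fin 2 → Fin 2 → Fin 2 → Fin 2 → Fin 2 → ℂ :=
  fun a b c d e f => (if a = d then 1 else 0) * S b c e f

/-- Composition of linear maps on `ℂ² ⊗ ℂ² ⊗ ℂ²` given by 6-index arrays: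
contraction of the lower index triple of the first against the upper index
triple of the second. -/
noncomputable def comp3
    (A B : Fin 2 → Fin 2 → Fin 2 → Fin 2 → Fin 2 → Fin 2 → ℂ) :
    Fin 2 → Fin 2 → Fin 2 → Fin 2 → Fin 2 → Fin 2 → ℂ :=
  fun a b c d e f => ∑ x : Fin 2, ∑ y : Fin 2, ∑ z : Fin 2,
    A a b c x y z * B x y z d e f

lemma S0000 (ζ : ℝ) : exoticS ζ 0 0 0 0 = 0 := by simp [exoticS]
lemma S0001 (ζ : ℝ) : exoticS ζ 0 0 0 1 = 0 := by simp [exoticS]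
lemma S0010 (ζ : ℝ) : exoticS ζ 0 0 1 0 = 0 := by simp [exoticS]
lemma S0011 (ζ : ℝ) : exoticS ζ 0 0 1 1 = (ζ : ℂ) := by simp [exoticS]
lemma S0100 (ζ : ℝ) : exoticS ζ 0 1 0 0 = 0 := by simp [exoticS]
lemma S0101 (ζ : ℝ) : exoticS ζ 0 1 0 1 = -1 := by simp [exoticS]
lemma S0110 (ζ : ℝ) : exoticS ζ 0 1 1 0 = 0 := by simp [exoticS]
lemma S0111 (ζ : ℝ) : exoticS ζ 0 1 1 1 = 0 := by simp [exoticS]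
lemma S1000 (ζ : ℝ) : exoticS ζ 1 0 0 0 = 0 := by simp [exoticS]
lemma S1001 (ζ : ℝ) : exoticS ζ 1 0 0 1 = 0 := by simp [exoticS]
lemma S1010 (ζ : ℝ) : exoticS ζ 1 0 1 0 = -1 := by simp [exoticS]
lemma S1011 (ζ : ℝ) : exoticS ζ 1 0 1 1 = 0 := by simp [exoticS]
lemma S1100 (ζ : ℝ) : exoticS ζ 1 1 0 0 = (ζ : ℂ)⁻¹ := by simp [exoticS]
lemma S1101 (ζ : ℝ) : exoticS ζ 1 1 0 1 = 0 := by simp [exoticS]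
lemma S1110 (ζ : ℝ) : exoticS ζ 1 1 1 0 = 0 := by simp [exoticS]
lemma S1111 (ζ : ℝ) : exoticS ζ 1 1 1 1 = 0 := by simp [exoticS]
lemma g00 (ζ : ℝ) : exoticg ζ 0 0 = Complex.I := by simp [exoticg]
lemma g01 (ζ : ℝ) : exoticg ζ 0 1 = 0 := by simp [exoticg]
lemma g10 (ζ : ℝ) : exoticg ζ 1 0 = 0 := by simp [exoticg]
lemma g11 (ζ : ℝ) : exoticg ζ 1 1 = -Complex.I * (ζ : ℂ)⁻¹ := by simp [exoticg]

set_option maxHeartbeats 2000000 in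
/-- The degenerate 'exotic' solution: (a) `S` satisfies the braid equation;
(b) `g` annihilates the symmetrized tensor product, `g∘(1+σ) = 0`;
(c) metric compatibility holds. -/
theorem exotic_solution (ζ : ℝ) (hζ : ζ ≠ 0) :
    (comp3 (comp3 (lift12 (exoticS ζ)) (lift23 (exoticS ζ))) (lift12 (exoticS ζ))
      = comp3 (comp3 (lift23 (exoticS ζ)) (lift12 (exoticS ζ))) (lift23 (exoticS ζ)))
    ∧ (∀ i j : Fin 2,
        (∑ k : Fin 2, ∑ l : Fin 2,
            ((if i = k then 1 else 0) * (if j = l then 1 else 0)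
                + exoticS ζ i j k l) * exoticg ζ k l)
          = 0)
    ∧ (∀ i j k l : Fin 2,
        (∑ m : Fin 2, ∑ n : Fin 2, ∑ r : Fin 2,
            exoticS ζ i m l n * exoticg ζ n r * exoticS ζ j k m r)
          = exoticg ζ i j * (if k = l then 1 else 0)) := by
  have hz : (ζ : ℂ) ≠ 0 := by exact_mod_cast hζ
  refine ⟨?_, ?_, ?_⟩
  · funext a b c d e f
    fin_cases a <;> fin_cases b <;> fin_cases c <;> fin_cases d <;> fin_cases e <;> fin_cases f <;>
      simp only [comp3, lift12, lift23, Fin.sum_univ_two, Fin.isValue, S0000, S0001, S0010, S0011, S0100, S0101, S0110, S0111, S1000, S1001, S1010, S1011, S1100, S1101, S1110, S1111, g00, g01, g10, g11] <;>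
      norm_num [exoticS]
  · intro i j
    fin_cases i <;> fin_cases j <;>
      simp only [Fin.sum_univ_two, Fin.isValue, S0000, S0001, S0010, S0011, S0100, S0101, S0110, S0111, S1000, S1001, S1010, S1011, S1100, S1101, S1110, S1111, g00, g01, g10, g11] <;>
      norm_num [exoticS, exoticg, Complex.ext_iff] <;> field_simp <;> ring
  · intro i j k l
    fin_cases i <;> fin_cases j <;> fin_cases k <;> fin_cases l <;>
      simp only [Fin.sum_univ_two, Fin.isValue, S0000, S0001, S0010, S0011, S0100, S0101, S0110, S0111, S1000, S1001, S1010, S1011, S1100, S1101, S1110, S1111, g00, g01, g10, g11] <;>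
      norm_num [exoticS, exoticg] <;> field_simp <;> ring
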